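/- arXiv:1309.2666 — 2 statements merged into one kernel-verified Lean document; each statement's English description precedes it below -/
import Mathlib

section
/- For x, y, z > 0, define z' ≥ 0 by cosh(z') = coth(x)·coth(y) + cosh(z)/(sinh(x)·sinh(y)). If x, y, z all tend to infinity while remaining within a factor of 3/2 of each other (i.e., x ≤ y ≤ (3/2)x and x ≤ z ≤ (3/2)x), then z' tends to 0. -/
open Real

theorem stmt_10 :
    ∀ ε : ℝ, 0 < ε → ∃ M : ℝ, ∀ x y z z' : ℝ,
      M ≤ x → x ≤ y → y ≤ (3/2) * x → x ≤ z → z ≤ (3/2) * x → 0 ≤ z' →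
      Real.cosh z' = (Real.cosh x / Real.sinh x) * (Real.cosh y / Real.sinh y)
          + Real.cosh z / (Real.sinh x * Real.sinh y) →
      z' < ε := by
  intro ε hε
  set δ := Real.cosh ε - 1 with hδdef
  have hδ : 0 < δ := by
    have := (Real.one_lt_cosh (x := ε)).2 (ne_of_gt hε)
    linarith
  refine ⟨max 1 (-2 * Real.log (δ / 19) + 1), ?_⟩
  intro x y z z' hMx hxy hyx hxz hzx hz' heq
  have hx1 : (1 : ℝ) ≤ x := le_trans (le_max_left _ _) hMx
  have hx0 : 0 < x := by linarith
  have hy1 : (1 : ℝ) ≤ y := le_trans hx1 hxy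
  -- exp(-x/2) < δ/19
  have hexp : Real.exp (-(x / 2)) < δ / 19 := by
    have h1 : -2 * Real.log (δ / 19) + 1 ≤ x := le_trans (le_max_right _ _) hMx
    have h2 : -(x / 2) < Real.log (δ / 19) := by linarith
    calc Real.exp (-(x / 2)) < Real.exp (Real.log (δ / 19)) := Real.exp_lt_exp.2 h2
      _ = δ / 19 := Real.exp_log (by positivity)
  -- sinh bounds
  have hsx1 : (1 : ℝ) ≤ Real.sinh x := le_trans hx1 (le_of_lt ((Real.self_lt_sinh_iff).2 hx0))
  have hsy1 : (1 : ℝ) ≤ Real.sinh y := le_trans hsx1 ((Real.sinh_le_sinh).2 hxy)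
  have hsx0 : 0 < Real.sinh x := by linarith
  have hsy0 : 0 < Real.sinh y := by linarith
  have hexlb : Real.exp x / 4 ≤ Real.sinh x := by
    rw [Real.sinh_eq]
    have h1 : Real.exp (-x) ≤ 1 := Real.exp_le_one_iff.2 (by linarith)
    have h2 : (2 : ℝ) ≤ Real.exp x := by
      calc (2 : ℝ) ≤ Real.exp 1 := by
            have := Real.add_one_le_exp (1 : ℝ); linarith
        _ ≤ Real.exp x := Real.exp_le_exp.2 hx1
    linarith
  have heylb : Real.exp x / 4 ≤ Real.sinh y := le_trans hexlb ((Real.sinh_le_sinh).2 hxy)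
  -- coth bounds
  have hcothx : Real.cosh x / Real.sinh x ≤ 1 + Real.exp (-x) := by
    have h : Real.cosh x = Real.sinh x + Real.exp (-x) := by
      have := Real.cosh_sub_sinh x; linarith
    rw [h, div_le_iff₀ hsx0]
    have : Real.exp (-x) * 1 ≤ Real.exp (-x) * Real.sinh x :=
      mul_le_mul_of_nonneg_left hsx1 (Real.exp_nonneg _)
    nlinarith [Real.exp_nonneg (-x)]
  have hcothy : Real.cosh y / Real.sinh y ≤ 1 + Real.exp (-x) := by
    have h : Real.cosh y = Real.sinh y + Real.exp (-y) := by
      have := Real.cosh_sub_sinh y; linarith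
    rw [h, div_le_iff₀ hsy0]
    have h1 : Real.exp (-y) ≤ Real.exp (-x) := Real.exp_le_exp.2 (by linarith)
    nlinarith [Real.exp_nonneg (-y), Real.exp_nonneg (-x)]
  have hexx : Real.exp (-x) ≤ Real.exp (-(x / 2)) := Real.exp_le_exp.2 (by linarith)
  have he1 : Real.exp (-x) ≤ 1 := Real.exp_le_one_iff.2 (by linarith)
  -- product bound
  have hprod : (Real.cosh x / Real.sinh x) * (Real.cosh y / Real.sinh y)
      ≤ 1 + 3 * Real.exp (-(x / 2)) := by
    have hc1 : 0 < Real.cosh x / Real.sinh x := div_pos (Real.cosh_pos x) hsx0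
    have : (Real.cosh x / Real.sinh x) * (Real.cosh y / Real.sinh y)
        ≤ (1 + Real.exp (-x)) * (1 + Real.exp (-x)) := by
      apply mul_le_mul hcothx hcothy (le_of_lt (div_pos (Real.cosh_pos y) hsy0)) (by positivity)
    nlinarith [Real.exp_nonneg (-x)]
  -- second term bound
  have hterm2 : Real.cosh z / (Real.sinh x * Real.sinh y) ≤ 16 * Real.exp (-(x / 2)) := by
    have hz0 : 0 < z := by linarith
    have hcz : Real.cosh z ≤ Real.exp ((3/2) * x) := by
      rw [Real.cosh_eq]
      have h1 : Real.exp (-z) ≤ Real.exp z := Real.exp_le_exp.2 (by linarith)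
      have h2 : Real.exp z ≤ Real.exp ((3/2) * x) := Real.exp_le_exp.2 hzx
      linarith
    have hden : Real.exp x / 4 * (Real.exp x / 4) ≤ Real.sinh x * Real.sinh y :=
      mul_le_mul hexlb heylb (by positivity) (le_of_lt hsx0)
    calc Real.cosh z / (Real.sinh x * Real.sinh y)
        ≤ Real.exp ((3/2) * x) / (Real.exp x / 4 * (Real.exp x / 4)) := by
          apply div_le_div₀ (Real.exp_nonneg _) hcz (by positivity) hden
      _ = 16 * Real.exp (-(x / 2)) := by
          rw [show (3/2:ℝ) * x = -(x/2) + x + x by ring, Real.exp_add, Real.exp_add]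
          have h0 : Real.exp x ≠ 0 := Real.exp_ne_zero x
          field_simp
          ring
  -- combine
  have hkey : Real.cosh z' < Real.cosh ε := by
    rw [heq]
    have : (Real.cosh x / Real.sinh x) * (Real.cosh y / Real.sinh y)
        + Real.cosh z / (Real.sinh x * Real.sinh y) ≤ 1 + 19 * Real.exp (-(x / 2)) := by
      linarith
    have h19 : 19 * Real.exp (-(x / 2)) < δ := by linarith
    calc _ ≤ 1 + 19 * Real.exp (-(x / 2)) := this
      _ < 1 + δ := by linarith
      _ = Real.cosh ε := by rw [hδdef]; ring
  have := (Real.cosh_lt_cosh).1 hkey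
  rw [abs_of_nonneg hz', abs_of_pos hε] at this
  exact this
end

section
/- Suppose |c| > 0, K ≥ 1, |d₁| ≤ (|c| + K²|c|)/2, and |c| ≤ |d₁|·(K/4 + 1/2). Then 1 ≤ (K/4 + 1/2)·(1 + K²)/2, and hence K ≥ 1.218. -/
theorem stmt_15 (c K d₁ : ℝ) (hc : 0 < c) (hK : 1 ≤ K)
    (hd₁ : d₁ ≤ (c + K ^ 2 * c) / 2) (h : c ≤ d₁ * (K / 4 + 1 / 2)) :
    1 ≤ (K / 4 + 1 / 2) * (1 + K ^ 2) / 2 ∧ K ≥ 1.218 := by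
  have h1 : 1 ≤ (K / 4 + 1 / 2) * (1 + K ^ 2) / 2 := by
    have hpos : 0 < K / 4 + 1 / 2 := by linarith
    nlinarith [mul_le_mul_of_nonneg_right hd₁ hpos.le]
  refine ⟨h1, ?_⟩
  nlinarith [sq_nonneg (K - 1.218), sq_nonneg K, sq_nonneg (K - 1)]
end
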